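/- Let A, B be non-negative contractions with A ≤ 𝟙, B ≤ 𝟙, t ∈ (0,1), X = λ₁(A)𝟙 − A, Y = λ₁(B)𝟙 − B, and Z = √t·X + i·√(1−t)·Y. Then i·√(t(1−t))·[A,B] = −Z Z* + t·X² + (1−t)·Y², and consequently (t·λ₁(A) + (1−t)·λ₁(B))·𝟙 − A ⋆_t B = t(X − X²) + (1−t)(Y − Y²) + Z Z*, which is positive semidefinite. -/

import Mathlib

open Matrix ComplexOrder

/-- Eigenvalues of a Hermitian matrix listed in non-increasing order:
`eigDesc hA j` is the `j`-th largest eigenvalue of `A`. -/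
noncomputable def eigDesc {n : ℕ} {A : Matrix (Fin n) (Fin n) ℂ} (hA : A.IsHermitian) :
    Fin n → ℝ :=
  fun j => hA.eigenvalues (Tuple.sort hA.eigenvalues (Fin.rev j))

/-- The partial-swap convolution `A ⋆_t B = tA + (1-t)B + i√(t(1-t))[A,B]`. -/
noncomputable def pswap {n : ℕ} (t : ℝ) (A B : Matrix (Fin n) (Fin n) ℂ) :
    Matrix (Fin n) (Fin n) ℂ :=
  (t : ℂ) • A + ((1 - t : ℝ) : ℂ) • B
    + (Complex.I * (Real.sqrt (t * (1 - t)) : ℂ)) • (A * B - B * A)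

/-- Every eigenvalue is at most the top one. -/
lemma eig_le_top {n : ℕ} [NeZero n] {A : Matrix (Fin n) (Fin n) ℂ} (hA : A.IsHermitian)
    (i : Fin n) : hA.eigenvalues i ≤ eigDesc hA 0 := by
  obtain ⟨k, hk⟩ := (Tuple.sort hA.eigenvalues).surjective i
  have hmono := Tuple.monotone_sort hA.eigenvalues
  have hle : k ≤ Fin.rev 0 := by
    rw [Fin.le_def, Fin.rev]
    simp
    omega
  have := hmono hle
  simpa [eigDesc, ← hk] using this

/-- Eigenvalues are at most one when `1 - A` is PSD. -/
lemma eig_le_one {n : ℕ} {A : Matrix (Fin n) (Fin n) ℂ} (hA : A.IsHermitian)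
    (h1 : (1 - A).PosSemidef) (i : Fin n) : hA.eigenvalues i ≤ 1 := by
  have hv := hA.mulVec_eigenvectorBasis i
  set v : Fin n → ℂ := ⇑(hA.eigenvectorBasis i) with hvdef
  have hnorm : dotProduct (star v) v = 1 := by
    have h2 := hA.eigenvectorBasis.orthonormal.1 i
    have : (inner ℂ (hA.eigenvectorBasis i) (hA.eigenvectorBasis i) : ℂ) = 1 := by
      rw [inner_self_eq_norm_sq_to_K, h2]; norm_num
    rw [EuclideanSpace.inner_eq_star_dotProduct, dotProduct_comm] at this
    exact this
  have hq := h1.dotProduct_mulVec_nonneg v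
  rw [sub_mulVec, one_mulVec, hv, dotProduct_sub, hnorm, dotProduct_smul, hnorm] at hq
  have h3 : (0:ℂ) ≤ ((1 - hA.eigenvalues i : ℝ) : ℂ) := by
    push_cast
    convert hq using 2
    simp [Complex.real_smul]
  rw [Complex.zero_le_real] at h3
  linarith

/-- `c•1 - A` is PSD when all eigenvalues of `A` are at most `c`. -/
lemma smul_one_sub_psd {n : ℕ} {A : Matrix (Fin n) (Fin n) ℂ} (hA : A.IsHermitian)
    (c : ℝ) (h : ∀ i, hA.eigenvalues i ≤ c) : ((c : ℂ) • 1 - A).PosSemidef := by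
  set U : Matrix (Fin n) (Fin n) ℂ := (hA.eigenvectorUnitary : Matrix (Fin n) (Fin n) ℂ) with hUdef
  have hU : U * Uᴴ = 1 := by
    rw [← Matrix.star_eq_conjTranspose]
    exact (Matrix.mem_unitaryGroup_iff).mp hA.eigenvectorUnitary.2
  have hdiag : diagonal (fun i => (c : ℂ) - (hA.eigenvalues i : ℂ))
      = (c : ℂ) • 1 - diagonal (RCLike.ofReal ∘ hA.eigenvalues) := by
    rw [Matrix.smul_one_eq_diagonal, Matrix.diagonal_sub]
    rfl
  have key : (c : ℂ) • 1 - A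
      = U * diagonal (fun i => (c : ℂ) - (hA.eigenvalues i : ℂ)) * Uᴴ := by
    rw [hdiag, Matrix.mul_sub, Matrix.sub_mul]
    have h1 : U * ((c : ℂ) • (1 : Matrix (Fin n) (Fin n) ℂ)) * Uᴴ = (c : ℂ) • 1 := by
      rw [Matrix.mul_smul, Matrix.mul_one, Matrix.smul_mul, hU]
    have h2 : U * diagonal (RCLike.ofReal ∘ hA.eigenvalues) * Uᴴ = A := by
      conv_rhs => rw [hA.spectral_theorem]
      rw [hUdef, Unitary.conjStarAlgAut_apply, Matrix.star_eq_conjTranspose]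
    rw [h1, h2]
  rw [key]
  apply Matrix.PosSemidef.mul_mul_conjTranspose_same
  refine posSemidef_diagonal_iff.mpr fun i => ?_
  have : ((c - hA.eigenvalues i : ℝ) : ℂ) = (c : ℂ) - (hA.eigenvalues i : ℂ) := by push_cast; ring
  rw [← this, Complex.zero_le_real]
  linarith [h i]

open scoped MatrixOrder in
/-- `X - X²` is PSD when `0 ≤ X ≤ 1`. -/
lemma psd_sub_sq {n : ℕ} {X : Matrix (Fin n) (Fin n) ℂ} (hX : X.PosSemidef)
    (h1 : (1 - X).PosSemidef) : (X - X * X).PosSemidef := by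
  have hs := (CFC.sqrt_nonneg X).posSemidef
  have hss := CFC.sqrt_mul_sqrt_self X hX.nonneg
  obtain ⟨S, hSd⟩ : ∃ S, S = CFC.sqrt X := ⟨_, rfl⟩
  have hSh : Sᴴ = S := by rw [hSd]; exact hs.isHermitian.eq
  have hss' : S * S = X := by rw [hSd]; exact hss
  have hc : S * X = X * S := by rw [← hss', Matrix.mul_assoc]
  have key : X - X * X = S * (1 - X) * Sᴴ := by
    rw [hSh, Matrix.mul_sub, Matrix.mul_one, Matrix.sub_mul, hss',
      hc, Matrix.mul_assoc, hss']
  rw [key, hSd]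
  rw [hSd] at hSh
  exact h1.mul_mul_conjTranspose_same _

/-- Nonnegative real scalar multiples of PSD matrices are PSD. -/
lemma psd_real_smul {n : ℕ} {M : Matrix (Fin n) (Fin n) ℂ} (hM : M.PosSemidef)
    {r : ℝ} (hr : 0 ≤ r) : ((r : ℂ) • M).PosSemidef := by
  refine Matrix.PosSemidef.of_dotProduct_mulVec_nonneg ?_ ?_
  · unfold Matrix.IsHermitian
    rw [Matrix.conjTranspose_smul, hM.1.eq]
    congr 1
    simp [Complex.star_def, Complex.conj_ofReal]
  · intro x
    rw [Matrix.smul_mulVec, dotProduct_smul]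
    exact mul_nonneg (Complex.zero_le_real.mpr hr) (hM.dotProduct_mulVec_nonneg x)

theorem stmt_4 {n : ℕ} [NeZero n] (t : ℝ) (ht : t ∈ Set.Ioo (0 : ℝ) 1)
    (A B X Y Z : Matrix (Fin n) (Fin n) ℂ)
    (hA : A.PosSemidef) (hB : B.PosSemidef)
    (hA1 : (1 - A).PosSemidef) (hB1 : (1 - B).PosSemidef)
    (hX : X = (eigDesc hA.isHermitian 0 : ℂ) • 1 - A)
    (hY : Y = (eigDesc hB.isHermitian 0 : ℂ) • 1 - B)
    (hZ : Z = (Real.sqrt t : ℂ) • X + (Complex.I * (Real.sqrt (1 - t) : ℂ)) • Y) :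
    (Complex.I * (Real.sqrt (t * (1 - t)) : ℂ)) • (A * B - B * A)
        = -(Z * Zᴴ) + (t : ℂ) • (X * X) + ((1 - t : ℝ) : ℂ) • (Y * Y) ∧
    ((t * eigDesc hA.isHermitian 0 + (1 - t) * eigDesc hB.isHermitian 0 : ℝ) : ℂ) • 1
        - pswap t A B
      = (t : ℂ) • (X - X * X) + ((1 - t : ℝ) : ℂ) • (Y - Y * Y) + Z * Zᴴ ∧
    (((t * eigDesc hA.isHermitian 0 + (1 - t) * eigDesc hB.isHermitian 0 : ℝ) : ℂ) • 1
        - pswap t A B).PosSemidef := by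
  obtain ⟨ht0, ht1⟩ := ht
  set cA : ℝ := eigDesc hA.isHermitian 0 with hcA
  set cB : ℝ := eigDesc hB.isHermitian 0 with hcB
  have hAh : Aᴴ = A := hA.isHermitian.eq
  have hBh : Bᴴ = B := hB.isHermitian.eq
  have hXh : Xᴴ = X := by
    rw [hX]; simp [Matrix.conjTranspose_sub, Matrix.conjTranspose_smul, hAh,
      Complex.star_def, Complex.conj_ofReal]
  have hYh : Yᴴ = Y := by
    rw [hY]; simp [Matrix.conjTranspose_sub, Matrix.conjTranspose_smul, hBh,
      Complex.star_def, Complex.conj_ofReal]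
  have hZc : Zᴴ = (Real.sqrt t : ℂ) • X - (Complex.I * (Real.sqrt (1 - t) : ℂ)) • Y := by
    rw [hZ, Matrix.conjTranspose_add, Matrix.conjTranspose_smul, Matrix.conjTranspose_smul,
      hXh, hYh]
    rw [show star ((Real.sqrt t : ℝ) : ℂ) = ((Real.sqrt t : ℝ) : ℂ) by
      simp [Complex.star_def, Complex.conj_ofReal]]
    rw [show star (Complex.I * ((Real.sqrt (1-t) : ℝ) : ℂ)) = -(Complex.I * ((Real.sqrt (1-t) : ℝ) : ℂ)) by
      simp [Complex.star_def, Complex.conj_ofReal]]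
    rw [neg_smul, ← sub_eq_add_neg]
  have hcm : X * Y - Y * X = A * B - B * A := by
    rw [hX, hY]
    simp only [Matrix.sub_mul, Matrix.mul_sub, Matrix.smul_mul, Matrix.mul_smul,
      Matrix.one_mul, Matrix.mul_one, smul_smul]
    module
  have ha2 : ((Real.sqrt t : ℝ) : ℂ) * ((Real.sqrt t : ℝ) : ℂ) = (t : ℂ) := by
    rw [← Complex.ofReal_mul, Real.mul_self_sqrt ht0.le]
  have hb2 : ((Real.sqrt (1-t) : ℝ) : ℂ) * ((Real.sqrt (1-t) : ℝ) : ℂ) = ((1-t : ℝ) : ℂ) := by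
    rw [← Complex.ofReal_mul, Real.mul_self_sqrt (by linarith)]
  have hab : ((Real.sqrt t : ℝ) : ℂ) * ((Real.sqrt (1-t) : ℝ) : ℂ)
      = ((Real.sqrt (t*(1-t)) : ℝ) : ℂ) := by
    rw [← Complex.ofReal_mul, Real.sqrt_mul ht0.le]
  have key : Z * Zᴴ = (t : ℂ) • (X * X) + ((1 - t : ℝ) : ℂ) • (Y * Y)
      - (Complex.I * ((Real.sqrt (t*(1-t)) : ℝ) : ℂ)) • (X * Y - Y * X) := by
    rw [hZc, hZ]
    simp only [Matrix.add_mul, Matrix.mul_sub, Matrix.sub_mul, Matrix.mul_add,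
      Matrix.smul_mul, Matrix.mul_smul, smul_smul, smul_sub, smul_add]
    match_scalars
    · linear_combination ha2
    · linear_combination Complex.I * hab
    · linear_combination (-Complex.I) * hab
    · linear_combination (-(Complex.I*Complex.I)) * hb2 - ((1-t : ℝ) : ℂ) * Complex.I_mul_I
        + Complex.ofReal_sub 1 t + Complex.ofReal_one
  have part1 : (Complex.I * (Real.sqrt (t * (1 - t)) : ℂ)) • (A * B - B * A)
      = -(Z * Zᴴ) + (t : ℂ) • (X * X) + ((1 - t : ℝ) : ℂ) • (Y * Y) := by
    rw [key, hcm]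
    module
  refine ⟨part1, ?_, ?_⟩
  · rw [show pswap t A B = (t : ℂ) • A + ((1 - t : ℝ) : ℂ) • B
      + (Complex.I * (Real.sqrt (t * (1 - t)) : ℂ)) • (A * B - B * A) from rfl]
    rw [part1, hX, hY]
    match_scalars <;> ring
  · have hXpsd : X.PosSemidef := by
      rw [hX]
      exact smul_one_sub_psd hA.isHermitian cA (fun i => eig_le_top hA.isHermitian i)
    have hYpsd : Y.PosSemidef := by
      rw [hY]
      exact smul_one_sub_psd hB.isHermitian cB (fun i => eig_le_top hB.isHermitian i)
    have hcA1 : cA ≤ 1 := eig_le_one hA.isHermitian hA1 _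
    have hcB1 : cB ≤ 1 := eig_le_one hB.isHermitian hB1 _
    have h1X : (1 - X).PosSemidef := by
      have heq : (1 : Matrix (Fin n) (Fin n) ℂ) - X = ((1 - cA : ℝ) : ℂ) • 1 + A := by
        rw [hX]; push_cast; module
      rw [heq]
      exact (psd_real_smul (Matrix.PosSemidef.one) (by linarith)).add hA
    have h1Y : (1 - Y).PosSemidef := by
      have heq : (1 : Matrix (Fin n) (Fin n) ℂ) - Y = ((1 - cB : ℝ) : ℂ) • 1 + B := by
        rw [hY]; push_cast; module
      rw [heq]
      exact (psd_real_smul (Matrix.PosSemidef.one) (by linarith)).add hB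
    have part2 : ((t * cA + (1 - t) * cB : ℝ) : ℂ) • 1 - pswap t A B
        = (t : ℂ) • (X - X * X) + ((1 - t : ℝ) : ℂ) • (Y - Y * Y) + Z * Zᴴ := by
      rw [show pswap t A B = (t : ℂ) • A + ((1 - t : ℝ) : ℂ) • B
        + (Complex.I * (Real.sqrt (t * (1 - t)) : ℂ)) • (A * B - B * A) from rfl]
      rw [part1, hX, hY]
      match_scalars <;> ring
    rw [part2]
    refine (Matrix.PosSemidef.add (Matrix.PosSemidef.add ?_ ?_) ?_)
    · exact psd_real_smul (psd_sub_sq hXpsd h1X) ht0.le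
    · exact psd_real_smul (psd_sub_sq hYpsd h1Y) (by linarith)
    · exact Matrix.posSemidef_self_mul_conjTranspose Z
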